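/- Let μ̃ be the bilinear skew-symmetric map on ℝ^7 with nonzero basis brackets [e1,e2]=(√930/124)e4, [e1,e3]=(√31/31)e6, [e1,e4]=(√341/62)e3+(√62/62)e5, [e1,e5]=(√682/124)e6, [e1,e6]=(√341/62)e7, [e2,e3]=(√1302/124)e7, [e2,e4]=(√1302/124)e6. Then μ̃ satisfies the Jacobi identity, D = diag(1,2,4,3,4,5,6) is a derivation of (ℝ^7,μ̃), and m(μ̃) = -(107/124)·Id + (25/124)·D; in particular m(μ̃) = diag(-41/62,-57/124,-7/124,-8/31,-7/124,9/62,43/124). -/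
import Mathlib


open Finset

noncomputable section

/-- `ℝ⁷` with its standard basis and standard inner product. -/
abbrev V7 : Type := Fin 7 → ℝ

/-- The standard basis vector `e i`. -/
def e (i : Fin 7) : V7 := Pi.single i 1

/-- The standard inner product on `ℝ⁷`. -/
def dot (x y : V7) : ℝ := ∑ i, x i * y i

/-- Structure constants built from a list of entries `(i, j, k, a)`, each meaning that
`μ (e i) (e j)` has component `a` along `e k` (and `μ (e j) (e i)` has component `-a`);
all unlisted basis brackets are `0`. -/
def toC (L : List (Fin 7 × Fin 7 × Fin 7 × ℝ)) (i j k : Fin 7) : ℝ :=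
  (L.map fun t =>
      (if t.1 = i ∧ t.2.1 = j ∧ t.2.2.1 = k then t.2.2.2 else 0)
    - (if t.1 = j ∧ t.2.1 = i ∧ t.2.2.1 = k then t.2.2.2 else 0)).sum

/-- The bilinear skew-symmetric map on `ℝ⁷` with structure constants `c`. -/
def br (c : Fin 7 → Fin 7 → Fin 7 → ℝ) (x y : V7) : V7 :=
  fun k => ∑ i, ∑ j, x i * y j * c i j k

lemma br_add_left (c : Fin 7 → Fin 7 → Fin 7 → ℝ) (x x' y : V7) :
    br c (x + x') y = br c x y + br c x' y := by
  funext k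
  simp only [br, Pi.add_apply, ← Finset.sum_add_distrib]
  exact Finset.sum_congr rfl fun i _ => Finset.sum_congr rfl fun j _ => by ring

lemma br_smul_left (c : Fin 7 → Fin 7 → Fin 7 → ℝ) (r : ℝ) (x y : V7) :
    br c (r • x) y = r • br c x y := by
  funext k
  simp only [br, Pi.smul_apply, smul_eq_mul, Finset.mul_sum]
  exact Finset.sum_congr rfl fun i _ => Finset.sum_congr rfl fun j _ => by ring

lemma br_add_right (c : Fin 7 → Fin 7 → Fin 7 → ℝ) (x y y' : V7) :
    br c x (y + y') = br c x y + br c x y' := by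
  funext k
  simp only [br, Pi.add_apply, ← Finset.sum_add_distrib]
  exact Finset.sum_congr rfl fun i _ => Finset.sum_congr rfl fun j _ => by ring

lemma br_smul_right (c : Fin 7 → Fin 7 → Fin 7 → ℝ) (r : ℝ) (x y : V7) :
    br c x (r • y) = r • br c x y := by
  funext k
  simp only [br, Pi.smul_apply, smul_eq_mul, Finset.mul_sum]
  exact Finset.sum_congr rfl fun i _ => Finset.sum_congr rfl fun j _ => by ring

lemma br_zero_left (c : Fin 7 → Fin 7 → Fin 7 → ℝ) (y : V7) : br c 0 y = 0 := by
  funext k; simp [br]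

lemma br_zero_right (c : Fin 7 → Fin 7 → Fin 7 → ℝ) (x : V7) : br c x 0 = 0 := by
  funext k; simp [br]

/-- The space of derivations of the algebra `(ℝ⁷, br c)`, i.e. the linear maps `D` with
`D (μ x y) = μ (D x) y + μ x (D y)` for all `x, y`, as a submodule of the endomorphisms. -/
def derivations (c : Fin 7 → Fin 7 → Fin 7 → ℝ) : Submodule ℝ (Module.End ℝ V7) where
  carrier := {D | ∀ x y, D (br c x y) = br c (D x) y + br c x (D y)}
  add_mem' := by
    intro D E hD hE x y
    simp only [LinearMap.add_apply, hD x y, hE x y, br_add_left, br_add_right]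
    abel
  zero_mem' := by
    intro x y
    simp [br_zero_left, br_zero_right]
  smul_mem' := by
    intro r D hD x y
    simp only [LinearMap.smul_apply, hD x y, smul_add, br_smul_left, br_smul_right]

/-- The Jacobi identity for the bracket `br c`. -/
def Jacobi (c : Fin 7 → Fin 7 → Fin 7 → ℝ) : Prop :=
  ∀ x y z : V7, br c (br c x y) z + br c (br c y z) x + br c (br c z x) y = 0

/-- Skew-symmetry of the bracket `br c`. -/
def Skew (c : Fin 7 → Fin 7 → Fin 7 → ℝ) : Prop :=
  ∀ x y : V7, br c x y = - br c y x

/-- The diagonal endomorphism `diag (a 1, …, a 7)` of `ℝ⁷`, `e i ↦ a i • e i`. -/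
def diagL (a : Fin 7 → ℝ) : Module.End ℝ V7 :=
  LinearMap.pi fun i => a i • LinearMap.proj i

/-- Structure constants of the bracket `μ̃`. -/
def c11 : Fin 7 → Fin 7 → Fin 7 → ℝ :=
  toC [(0, 1, 3, Real.sqrt 930 / 124),
   (0, 2, 5, Real.sqrt 31 / 31),
   (0, 3, 2, Real.sqrt 341 / 62),
   (0, 3, 4, Real.sqrt 62 / 62),
   (0, 4, 5, Real.sqrt 682 / 124),
   (0, 5, 6, Real.sqrt 341 / 62),
   (1, 2, 6, Real.sqrt 1302 / 124),
   (1, 3, 5, Real.sqrt 1302 / 124)]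

lemma br_e (c : Fin 7 → Fin 7 → Fin 7 → ℝ) (a b : Fin 7) :
    br c (e a) (e b) = fun k => c a b k := by
  funext k
  simp [br, e, Pi.single_apply]

lemma bv_0_0 : br c11 (e 0) (e 0) = 0 := by
  rw [br_e]; funext k; fin_cases k <;> simp [c11, toC, e, Pi.single_apply]
lemma bv_0_1 : br c11 (e 0) (e 1) = (Real.sqrt 930 / 124) • e 3 := by
  rw [br_e]; funext k; fin_cases k <;> simp [c11, toC, e, Pi.single_apply]
lemma bv_0_2 : br c11 (e 0) (e 2) = (Real.sqrt 31 / 31) • e 5 := by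
  rw [br_e]; funext k; fin_cases k <;> simp [c11, toC, e, Pi.single_apply]
lemma bv_0_3 : br c11 (e 0) (e 3) = (Real.sqrt 341 / 62) • e 2 + (Real.sqrt 62 / 62) • e 4 := by
  rw [br_e]; funext k; fin_cases k <;> simp [c11, toC, e, Pi.single_apply]
lemma bv_0_4 : br c11 (e 0) (e 4) = (Real.sqrt 682 / 124) • e 5 := by
  rw [br_e]; funext k; fin_cases k <;> simp [c11, toC, e, Pi.single_apply]
lemma bv_0_5 : br c11 (e 0) (e 5) = (Real.sqrt 341 / 62) • e 6 := by
  rw [br_e]; funext k; fin_cases k <;> simp [c11, toC, e, Pi.single_apply]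
lemma bv_0_6 : br c11 (e 0) (e 6) = 0 := by
  rw [br_e]; funext k; fin_cases k <;> simp [c11, toC, e, Pi.single_apply]
lemma bv_1_0 : br c11 (e 1) (e 0) = (-(Real.sqrt 930 / 124)) • e 3 := by
  rw [br_e]; funext k; fin_cases k <;> simp [c11, toC, e, Pi.single_apply]
lemma bv_1_1 : br c11 (e 1) (e 1) = 0 := by
  rw [br_e]; funext k; fin_cases k <;> simp [c11, toC, e, Pi.single_apply]
lemma bv_1_2 : br c11 (e 1) (e 2) = (Real.sqrt 1302 / 124) • e 6 := by
  rw [br_e]; funext k; fin_cases k <;> simp [c11, toC, e, Pi.single_apply]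
lemma bv_1_3 : br c11 (e 1) (e 3) = (Real.sqrt 1302 / 124) • e 5 := by
  rw [br_e]; funext k; fin_cases k <;> simp [c11, toC, e, Pi.single_apply]
lemma bv_1_4 : br c11 (e 1) (e 4) = 0 := by
  rw [br_e]; funext k; fin_cases k <;> simp [c11, toC, e, Pi.single_apply]
lemma bv_1_5 : br c11 (e 1) (e 5) = 0 := by
  rw [br_e]; funext k; fin_cases k <;> simp [c11, toC, e, Pi.single_apply]
lemma bv_1_6 : br c11 (e 1) (e 6) = 0 := by
  rw [br_e]; funext k; fin_cases k <;> simp [c11, toC, e, Pi.single_apply]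
lemma bv_2_0 : br c11 (e 2) (e 0) = (-(Real.sqrt 31 / 31)) • e 5 := by
  rw [br_e]; funext k; fin_cases k <;> simp [c11, toC, e, Pi.single_apply]
lemma bv_2_1 : br c11 (e 2) (e 1) = (-(Real.sqrt 1302 / 124)) • e 6 := by
  rw [br_e]; funext k; fin_cases k <;> simp [c11, toC, e, Pi.single_apply]
lemma bv_2_2 : br c11 (e 2) (e 2) = 0 := by
  rw [br_e]; funext k; fin_cases k <;> simp [c11, toC, e, Pi.single_apply]
lemma bv_2_3 : br c11 (e 2) (e 3) = 0 := by
  rw [br_e]; funext k; fin_cases k <;> simp [c11, toC, e, Pi.single_apply]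
lemma bv_2_4 : br c11 (e 2) (e 4) = 0 := by
  rw [br_e]; funext k; fin_cases k <;> simp [c11, toC, e, Pi.single_apply]
lemma bv_2_5 : br c11 (e 2) (e 5) = 0 := by
  rw [br_e]; funext k; fin_cases k <;> simp [c11, toC, e, Pi.single_apply]
lemma bv_2_6 : br c11 (e 2) (e 6) = 0 := by
  rw [br_e]; funext k; fin_cases k <;> simp [c11, toC, e, Pi.single_apply]
lemma bv_3_0 : br c11 (e 3) (e 0) = (-(Real.sqrt 341 / 62)) • e 2 + (-(Real.sqrt 62 / 62)) • e 4 := by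
  rw [br_e]; funext k; fin_cases k <;> simp [c11, toC, e, Pi.single_apply]
lemma bv_3_1 : br c11 (e 3) (e 1) = (-(Real.sqrt 1302 / 124)) • e 5 := by
  rw [br_e]; funext k; fin_cases k <;> simp [c11, toC, e, Pi.single_apply]
lemma bv_3_2 : br c11 (e 3) (e 2) = 0 := by
  rw [br_e]; funext k; fin_cases k <;> simp [c11, toC, e, Pi.single_apply]
lemma bv_3_3 : br c11 (e 3) (e 3) = 0 := by
  rw [br_e]; funext k; fin_cases k <;> simp [c11, toC, e, Pi.single_apply]
lemma bv_3_4 : br c11 (e 3) (e 4) = 0 := by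
  rw [br_e]; funext k; fin_cases k <;> simp [c11, toC, e, Pi.single_apply]
lemma bv_3_5 : br c11 (e 3) (e 5) = 0 := by
  rw [br_e]; funext k; fin_cases k <;> simp [c11, toC, e, Pi.single_apply]
lemma bv_3_6 : br c11 (e 3) (e 6) = 0 := by
  rw [br_e]; funext k; fin_cases k <;> simp [c11, toC, e, Pi.single_apply]
lemma bv_4_0 : br c11 (e 4) (e 0) = (-(Real.sqrt 682 / 124)) • e 5 := by
  rw [br_e]; funext k; fin_cases k <;> simp [c11, toC, e, Pi.single_apply]
lemma bv_4_1 : br c11 (e 4) (e 1) = 0 := by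
  rw [br_e]; funext k; fin_cases k <;> simp [c11, toC, e, Pi.single_apply]
lemma bv_4_2 : br c11 (e 4) (e 2) = 0 := by
  rw [br_e]; funext k; fin_cases k <;> simp [c11, toC, e, Pi.single_apply]
lemma bv_4_3 : br c11 (e 4) (e 3) = 0 := by
  rw [br_e]; funext k; fin_cases k <;> simp [c11, toC, e, Pi.single_apply]
lemma bv_4_4 : br c11 (e 4) (e 4) = 0 := by
  rw [br_e]; funext k; fin_cases k <;> simp [c11, toC, e, Pi.single_apply]
lemma bv_4_5 : br c11 (e 4) (e 5) = 0 := by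
  rw [br_e]; funext k; fin_cases k <;> simp [c11, toC, e, Pi.single_apply]
lemma bv_4_6 : br c11 (e 4) (e 6) = 0 := by
  rw [br_e]; funext k; fin_cases k <;> simp [c11, toC, e, Pi.single_apply]
lemma bv_5_0 : br c11 (e 5) (e 0) = (-(Real.sqrt 341 / 62)) • e 6 := by
  rw [br_e]; funext k; fin_cases k <;> simp [c11, toC, e, Pi.single_apply]
lemma bv_5_1 : br c11 (e 5) (e 1) = 0 := by
  rw [br_e]; funext k; fin_cases k <;> simp [c11, toC, e, Pi.single_apply]
lemma bv_5_2 : br c11 (e 5) (e 2) = 0 := by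
  rw [br_e]; funext k; fin_cases k <;> simp [c11, toC, e, Pi.single_apply]
lemma bv_5_3 : br c11 (e 5) (e 3) = 0 := by
  rw [br_e]; funext k; fin_cases k <;> simp [c11, toC, e, Pi.single_apply]
lemma bv_5_4 : br c11 (e 5) (e 4) = 0 := by
  rw [br_e]; funext k; fin_cases k <;> simp [c11, toC, e, Pi.single_apply]
lemma bv_5_5 : br c11 (e 5) (e 5) = 0 := by
  rw [br_e]; funext k; fin_cases k <;> simp [c11, toC, e, Pi.single_apply]
lemma bv_5_6 : br c11 (e 5) (e 6) = 0 := by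
  rw [br_e]; funext k; fin_cases k <;> simp [c11, toC, e, Pi.single_apply]
lemma bv_6_0 : br c11 (e 6) (e 0) = 0 := by
  rw [br_e]; funext k; fin_cases k <;> simp [c11, toC, e, Pi.single_apply]
lemma bv_6_1 : br c11 (e 6) (e 1) = 0 := by
  rw [br_e]; funext k; fin_cases k <;> simp [c11, toC, e, Pi.single_apply]
lemma bv_6_2 : br c11 (e 6) (e 2) = 0 := by
  rw [br_e]; funext k; fin_cases k <;> simp [c11, toC, e, Pi.single_apply]
lemma bv_6_3 : br c11 (e 6) (e 3) = 0 := by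
  rw [br_e]; funext k; fin_cases k <;> simp [c11, toC, e, Pi.single_apply]
lemma bv_6_4 : br c11 (e 6) (e 4) = 0 := by
  rw [br_e]; funext k; fin_cases k <;> simp [c11, toC, e, Pi.single_apply]
lemma bv_6_5 : br c11 (e 6) (e 5) = 0 := by
  rw [br_e]; funext k; fin_cases k <;> simp [c11, toC, e, Pi.single_apply]
lemma bv_6_6 : br c11 (e 6) (e 6) = 0 := by
  rw [br_e]; funext k; fin_cases k <;> simp [c11, toC, e, Pi.single_apply]


lemma A0 : (![1, 2, 4, 3, 4, 5, 6] : Fin 7 → ℝ) 0 = 1 := rfl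
lemma A1 : (![1, 2, 4, 3, 4, 5, 6] : Fin 7 → ℝ) 1 = 2 := rfl
lemma A2 : (![1, 2, 4, 3, 4, 5, 6] : Fin 7 → ℝ) 2 = 4 := rfl
lemma A3 : (![1, 2, 4, 3, 4, 5, 6] : Fin 7 → ℝ) 3 = 3 := rfl
lemma A4 : (![1, 2, 4, 3, 4, 5, 6] : Fin 7 → ℝ) 4 = 4 := rfl
lemma A5 : (![1, 2, 4, 3, 4, 5, 6] : Fin 7 → ℝ) 5 = 5 := rfl
lemma A6 : (![1, 2, 4, 3, 4, 5, 6] : Fin 7 → ℝ) 6 = 6 := rfl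
lemma B0 : (![-41/62, -57/124, -7/124, -8/31, -7/124, 9/62, 43/124] : Fin 7 → ℝ) 0 = -41/62 := rfl
lemma B1 : (![-41/62, -57/124, -7/124, -8/31, -7/124, 9/62, 43/124] : Fin 7 → ℝ) 1 = -57/124 := rfl
lemma B2 : (![-41/62, -57/124, -7/124, -8/31, -7/124, 9/62, 43/124] : Fin 7 → ℝ) 2 = -7/124 := rfl
lemma B3 : (![-41/62, -57/124, -7/124, -8/31, -7/124, 9/62, 43/124] : Fin 7 → ℝ) 3 = -8/31 := rfl
lemma B4 : (![-41/62, -57/124, -7/124, -8/31, -7/124, 9/62, 43/124] : Fin 7 → ℝ) 4 = -7/124 := rfl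
lemma B5 : (![-41/62, -57/124, -7/124, -8/31, -7/124, 9/62, 43/124] : Fin 7 → ℝ) 5 = 9/62 := rfl
lemma B6 : (![-41/62, -57/124, -7/124, -8/31, -7/124, 9/62, 43/124] : Fin 7 → ℝ) 6 = 43/124 := rfl

lemma fin7cases (a : Fin 7) : a = 0 ∨ a = 1 ∨ a = 2 ∨ a = 3 ∨ a = 4 ∨ a = 5 ∨ a = 6 := by
  revert a; decide

lemma s930 : Real.sqrt 930 = Real.sqrt 2 * Real.sqrt 3 * Real.sqrt 5 * Real.sqrt 31 := by
  rw [show (930:ℝ) = 2*(3*(5*31)) by norm_num, Real.sqrt_mul (by norm_num),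
    Real.sqrt_mul (by norm_num), Real.sqrt_mul (by norm_num)]; ring
lemma s341 : Real.sqrt 341 = Real.sqrt 11 * Real.sqrt 31 := by
  rw [show (341:ℝ) = 11*31 by norm_num, Real.sqrt_mul (by norm_num)]
lemma s62 : Real.sqrt 62 = Real.sqrt 2 * Real.sqrt 31 := by
  rw [show (62:ℝ) = 2*31 by norm_num, Real.sqrt_mul (by norm_num)]
lemma s682 : Real.sqrt 682 = Real.sqrt 2 * Real.sqrt 11 * Real.sqrt 31 := by
  rw [show (682:ℝ) = 2*(11*31) by norm_num, Real.sqrt_mul (by norm_num),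
    Real.sqrt_mul (by norm_num)]; ring
lemma s1302 : Real.sqrt 1302 = Real.sqrt 2 * Real.sqrt 3 * Real.sqrt 7 * Real.sqrt 31 := by
  rw [show (1302:ℝ) = 2*(3*(7*31)) by norm_num, Real.sqrt_mul (by norm_num),
    Real.sqrt_mul (by norm_num), Real.sqrt_mul (by norm_num)]; ring
lemma q2 : Real.sqrt 2 ^ 2 = 2 := Real.sq_sqrt (by norm_num)
lemma q3 : Real.sqrt 3 ^ 2 = 3 := Real.sq_sqrt (by norm_num)
lemma q5 : Real.sqrt 5 ^ 2 = 5 := Real.sq_sqrt (by norm_num)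
lemma q7 : Real.sqrt 7 ^ 2 = 7 := Real.sq_sqrt (by norm_num)
lemma q11 : Real.sqrt 11 ^ 2 = 11 := Real.sq_sqrt (by norm_num)
lemma q31 : Real.sqrt 31 ^ 2 = 31 := Real.sq_sqrt (by norm_num)

lemma toC_anti (L : List (Fin 7 × Fin 7 × Fin 7 × ℝ)) (i j k : Fin 7) :
    toC L j i k = - toC L i j k := by
  induction L with
  | nil => simp [toC]
  | cons t L ih =>
    simp only [toC, List.map_cons, List.sum_cons] at ih ⊢
    linarith

lemma c11_anti (i j k : Fin 7) : c11 j i k = - c11 i j k := toC_anti _ i j k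

theorem skew11 : Skew c11 := by
  intro x y
  have key : br c11 x y + br c11 y x = 0 := by
    funext k
    simp only [br, Pi.add_apply, Pi.zero_apply]
    rw [Finset.sum_comm (f := fun i j => y i * x j * c11 i j k)]
    rw [← Finset.sum_add_distrib]
    refine Finset.sum_eq_zero fun i _ => ?_
    rw [← Finset.sum_add_distrib]
    refine Finset.sum_eq_zero fun j _ => ?_
    rw [c11_anti i j k]
    ring
  exact eq_neg_of_add_eq_zero_left key

lemma br_neg_left (c : Fin 7 → Fin 7 → Fin 7 → ℝ) (x y : V7) : br c (-x) y = - br c x y := by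
  have h := br_smul_left c (-1) x y
  simpa using h

lemma vec_expand (x : V7) : x = ∑ i, x i • e i := by
  funext k
  rw [Finset.sum_apply]
  simp [e, Pi.single_apply, mul_ite]

lemma lin_vanish (f : V7 → V7) (hadd : ∀ u v, f (u + v) = f u + f v)
    (hsmul : ∀ (r : ℝ) u, f (r • u) = r • f u) (h : ∀ i, f (e i) = 0) (x : V7) : f x = 0 := by
  have h0 : f 0 = 0 := by
    have := hsmul 0 0
    simpa using this
  have hsum : ∀ s : Finset (Fin 7), f (∑ i ∈ s, x i • e i) = ∑ i ∈ s, x i • f (e i) := by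
    intro s
    induction s using Finset.induction_on with
    | empty => simpa using h0
    | @insert a s has ih =>
      rw [Finset.sum_insert has, hadd, hsmul, Finset.sum_insert has, ih]
  rw [vec_expand x, hsum]
  simp [h]

def Jv (a b d : Fin 7) : V7 :=
  br c11 (br c11 (e a) (e b)) (e d) + br c11 (br c11 (e b) (e d)) (e a) +
    br c11 (br c11 (e d) (e a)) (e b)

lemma Jcyc (a b d : Fin 7) : Jv a b d = Jv b d a := by
  simp only [Jv]; abel

lemma Jswap (a b d : Fin 7) : Jv b a d = - Jv a b d := by
  simp only [Jv]
  rw [show br c11 (e b) (e a) = - br c11 (e a) (e b) from skew11 _ _,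
    show br c11 (e a) (e d) = - br c11 (e d) (e a) from skew11 _ _,
    show br c11 (e d) (e b) = - br c11 (e b) (e d) from skew11 _ _]
  simp only [br_neg_left]
  abel

lemma Jaa (a d : Fin 7) : Jv a a d = 0 := by
  have h := Jswap a a d
  funext k
  have hk := congrFun h k
  simp only [Pi.neg_apply] at hk
  simp only [Pi.zero_apply]
  linarith

lemma keysorted : ∀ a b d : Fin 7, a < b → b < d → Jv a b d = 0 := by
  intro a b d hab hbd
  rcases fin7cases a with rfl|rfl|rfl|rfl|rfl|rfl|rfl <;>
  rcases fin7cases b with rfl|rfl|rfl|rfl|rfl|rfl|rfl <;>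
  rcases fin7cases d with rfl|rfl|rfl|rfl|rfl|rfl|rfl <;>
  first
    | exact absurd hab (by decide)
    | exact absurd hbd (by decide)
    | (simp only [Jv, bv_0_0, bv_0_1, bv_0_2, bv_0_3, bv_0_4, bv_0_5, bv_0_6, bv_1_0, bv_1_1, bv_1_2, bv_1_3, bv_1_4, bv_1_5, bv_1_6, bv_2_0, bv_2_1, bv_2_2, bv_2_3, bv_2_4, bv_2_5, bv_2_6, bv_3_0, bv_3_1, bv_3_2, bv_3_3, bv_3_4, bv_3_5, bv_3_6, bv_4_0, bv_4_1, bv_4_2, bv_4_3, bv_4_4, bv_4_5, bv_4_6, bv_5_0, bv_5_1, bv_5_2, bv_5_3, bv_5_4, bv_5_5, bv_5_6, bv_6_0, bv_6_1, bv_6_2, bv_6_3, bv_6_4, bv_6_5, bv_6_6, br_smul_left, br_add_left, br_zero_left, br_zero_right,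
        smul_zero, zero_add, add_zero, neg_zero]
       try module)

lemma Jall : ∀ a b d : Fin 7, Jv a b d = 0 := by
  intro a b d
  rcases eq_or_ne a b with h|hab
  · subst h; exact Jaa a d
  rcases eq_or_ne b d with h|hbd
  · subst h; rw [Jcyc]; exact Jaa b a
  rcases eq_or_ne d a with h|hda
  · subst h; rw [Jcyc, Jcyc]; exact Jaa d b
  rcases lt_trichotomy a b with h1|h1|h1
  · rcases lt_trichotomy b d with h2|h2|h2
    · exact keysorted a b d h1 h2
    · exact absurd h2 hbd
    · rcases lt_trichotomy a d with h3|h3|h3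
      · rw [Jcyc, Jcyc, Jswap a d b, keysorted a d b h3 h2, neg_zero]
      · exact absurd h3.symm hda
      · rw [Jcyc, Jcyc]; exact keysorted d a b h3 h1
  · exact absurd h1 hab
  · rcases lt_trichotomy a d with h2|h2|h2
    · rw [Jswap b a d, keysorted b a d h1 h2, neg_zero]
    · exact absurd h2.symm hda
    · rcases lt_trichotomy b d with h3|h3|h3
      · rw [Jcyc]; exact keysorted b d a h3 h2
      · exact absurd h3 hbd
      · rw [Jcyc, Jswap d b a, keysorted d b a h3 h1, neg_zero]

theorem jacobi11 : Jacobi c11 := by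
  have key : ∀ a b d : Fin 7, br c11 (br c11 (e a) (e b)) (e d) +
      br c11 (br c11 (e b) (e d)) (e a) + br c11 (br c11 (e d) (e a)) (e b) = 0 := Jall
  have h2 : ∀ (a b : Fin 7) (z : V7), br c11 (br c11 (e a) (e b)) z +
      br c11 (br c11 (e b) z) (e a) + br c11 (br c11 z (e a)) (e b) = 0 := by
    intro a b z
    refine lin_vanish (fun w => br c11 (br c11 (e a) (e b)) w + br c11 (br c11 (e b) w) (e a) +
      br c11 (br c11 w (e a)) (e b)) (fun u v => ?_) (fun r u => ?_) (fun i => key a b i) z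
    · simp only [br_add_left, br_add_right]; module
    · simp only [br_smul_left, br_smul_right]; module
  have h1 : ∀ (a : Fin 7) (y z : V7), br c11 (br c11 (e a) y) z +
      br c11 (br c11 y z) (e a) + br c11 (br c11 z (e a)) y = 0 := by
    intro a y z
    refine lin_vanish (fun w => br c11 (br c11 (e a) w) z + br c11 (br c11 w z) (e a) +
      br c11 (br c11 z (e a)) w) (fun u v => ?_) (fun r u => ?_) (fun b => h2 a b z) y
    · simp only [br_add_left, br_add_right]; module
    · simp only [br_smul_left, br_smul_right]; module
  intro x y z
  refine lin_vanish (fun w => br c11 (br c11 w y) z + br c11 (br c11 y z) w +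
    br c11 (br c11 z w) y) (fun u v => ?_) (fun r u => ?_) (fun a => h1 a y z) x
  · simp only [br_add_left, br_add_right]; module
  · simp only [br_smul_left, br_smul_right]; module

lemma diag_e (v : Fin 7 → ℝ) (i : Fin 7) : diagL v (e i) = v i • e i := by
  funext k
  simp only [diagL, LinearMap.pi_apply, LinearMap.smul_apply, LinearMap.proj_apply,
    Pi.smul_apply, smul_eq_mul, e, Pi.single_apply, mul_ite, mul_one, mul_zero]
  split_ifs with h
  · rw [h]
  · rfl

lemma dkey : ∀ a b : Fin 7, diagL ![1, 2, 4, 3, 4, 5, 6] (br c11 (e a) (e b)) =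
    br c11 (diagL ![1, 2, 4, 3, 4, 5, 6] (e a)) (e b) + br c11 (e a) (diagL ![1, 2, 4, 3, 4, 5, 6] (e b)) := by
  intro a b
  rcases fin7cases a with rfl|rfl|rfl|rfl|rfl|rfl|rfl <;>
  rcases fin7cases b with rfl|rfl|rfl|rfl|rfl|rfl|rfl <;>
    (simp only [bv_0_0, bv_0_1, bv_0_2, bv_0_3, bv_0_4, bv_0_5, bv_0_6, bv_1_0, bv_1_1, bv_1_2, bv_1_3, bv_1_4, bv_1_5, bv_1_6, bv_2_0, bv_2_1, bv_2_2, bv_2_3, bv_2_4, bv_2_5, bv_2_6, bv_3_0, bv_3_1, bv_3_2, bv_3_3, bv_3_4, bv_3_5, bv_3_6, bv_4_0, bv_4_1, bv_4_2, bv_4_3, bv_4_4, bv_4_5, bv_4_6, bv_5_0, bv_5_1, bv_5_2, bv_5_3, bv_5_4, bv_5_5, bv_5_6, bv_6_0, bv_6_1, bv_6_2, bv_6_3, bv_6_4, bv_6_5, bv_6_6, diag_e, map_smul, map_add, map_zero, br_smul_left, br_smul_right,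
      br_add_left, br_add_right, br_zero_left, br_zero_right, smul_zero, zero_add, add_zero,
      A0, A1, A2, A3, A4, A5, A6]
     try module)

lemma dmem : ∀ x y : V7, diagL ![1, 2, 4, 3, 4, 5, 6] (br c11 x y) =
    br c11 (diagL ![1, 2, 4, 3, 4, 5, 6] x) y + br c11 x (diagL ![1, 2, 4, 3, 4, 5, 6] y) := by
  have h1 : ∀ (a : Fin 7) (w : V7), diagL ![1, 2, 4, 3, 4, 5, 6] (br c11 (e a) w) -
      (br c11 (diagL ![1, 2, 4, 3, 4, 5, 6] (e a)) w + br c11 (e a) (diagL ![1, 2, 4, 3, 4, 5, 6] w)) = 0 := by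
    intro a w
    refine lin_vanish (fun w => diagL ![1, 2, 4, 3, 4, 5, 6] (br c11 (e a) w) -
      (br c11 (diagL ![1, 2, 4, 3, 4, 5, 6] (e a)) w + br c11 (e a) (diagL ![1, 2, 4, 3, 4, 5, 6] w)))
      (fun u v => ?_) (fun r u => ?_) (fun b => ?_) w
    · simp only [br_add_left, br_add_right, map_add, br_smul_left, br_smul_right, map_smul]
      module
    · simp only [br_add_left, br_add_right, map_add, br_smul_left, br_smul_right, map_smul]
      module
    · show diagL ![1, 2, 4, 3, 4, 5, 6] (br c11 (e a) (e b)) -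
        (br c11 (diagL ![1, 2, 4, 3, 4, 5, 6] (e a)) (e b) + br c11 (e a) (diagL ![1, 2, 4, 3, 4, 5, 6] (e b))) = 0
      rw [dkey a b]; abel
  have h0 : ∀ x y : V7, diagL ![1, 2, 4, 3, 4, 5, 6] (br c11 x y) -
      (br c11 (diagL ![1, 2, 4, 3, 4, 5, 6] x) y + br c11 x (diagL ![1, 2, 4, 3, 4, 5, 6] y)) = 0 := by
    intro x y
    refine lin_vanish (fun w => diagL ![1, 2, 4, 3, 4, 5, 6] (br c11 w y) -
      (br c11 (diagL ![1, 2, 4, 3, 4, 5, 6] w) y + br c11 w (diagL ![1, 2, 4, 3, 4, 5, 6] y)))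
      (fun u v => ?_) (fun r u => ?_) (fun a => h1 a y) x
    · simp only [br_add_left, br_add_right, map_add, br_smul_left, br_smul_right, map_smul]
      module
    · simp only [br_add_left, br_add_right, map_add, br_smul_left, br_smul_right, map_smul]
      module
  intro x y
  exact sub_eq_zero.mp (h0 x y)

lemma dot_er (x : V7) (j : Fin 7) : dot x (e j) = x j := by
  simp [dot, e, Pi.single_apply, mul_ite]

set_option maxHeartbeats 4000000 in
lemma mtab : ∀ i k : Fin 7,
    -2 * (∑ p, ∑ q, c11 i p q * c11 k p q) + ∑ p, ∑ q, c11 p q i * c11 p q k =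
      ((![-41/62, -57/124, -7/124, -8/31, -7/124, 9/62, 43/124] : Fin 7 → ℝ) i) * (e i k) := by
  intro i k
  rcases fin7cases i with rfl|rfl|rfl|rfl|rfl|rfl|rfl <;>
  rcases fin7cases k with rfl|rfl|rfl|rfl|rfl|rfl|rfl <;>
    (simp [Fin.sum_univ_seven, c11, toC, s930, s341, s62, s682, s1302, e, Pi.single_apply,
      B0, B1, B2, B3, B4, B5, B6]
     try ring_nf
     try simp [q2, q3, q5, q7, q11, q31]
     try ring_nf
     try norm_num)

set_option maxHeartbeats 1000000 in
/-- The bracket satisfies the Jacobi identity (and is skew-symmetric),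
`D` is a derivation of it, and the unnormalized moment map `m(μ̃)` — i.e. the endomorphism
`m` of `ℝ⁷` determined by
`⟨m x, y⟩ = -2 ∑ᵢⱼ ⟨μ̃(x,eᵢ),eⱼ⟩⟨μ̃(y,eᵢ),eⱼ⟩ + ∑ᵢⱼ ⟨μ̃(eᵢ,eⱼ),x⟩⟨μ̃(eᵢ,eⱼ),y⟩` —
equals `-(107/124) • Id + 25/124 • D`, which is the indicated diagonal map. -/
theorem stmt :
    Skew c11 ∧ Jacobi c11 ∧
    diagL ![1, 2, 4, 3, 4, 5, 6] ∈ derivations c11 ∧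
    ∀ m : Module.End ℝ V7,
      (∀ x y : V7, dot (m x) y =
          -2 * ∑ i, ∑ j, dot (br c11 x (e i)) (e j) * dot (br c11 y (e i)) (e j)
          + ∑ i, ∑ j, dot (br c11 (e i) (e j)) x * dot (br c11 (e i) (e j)) y) →
      m = (-(107/124) : ℝ) • (1 : Module.End ℝ V7) + (25/124 : ℝ) • diagL ![1, 2, 4, 3, 4, 5, 6]
      ∧ m = diagL ![-41/62, -57/124, -7/124, -8/31, -7/124, 9/62, 43/124] := by
  refine ⟨skew11, jacobi11, ?_, ?_⟩
  · show ∀ x y : V7, diagL ![1, 2, 4, 3, 4, 5, 6] (br c11 x y) =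
      br c11 (diagL ![1, 2, 4, 3, 4, 5, 6] x) y + br c11 x (diagL ![1, 2, 4, 3, 4, 5, 6] y)
    exact dmem
  · intro m hm
    have hme : ∀ i : Fin 7, m (e i) = (((![-41/62, -57/124, -7/124, -8/31, -7/124, 9/62, 43/124]) : Fin 7 → ℝ) i) • e i := by
      intro i
      funext k
      have h := hm (e i) (e k)
      simp only [br_e, dot_er] at h
      rw [Pi.smul_apply, smul_eq_mul, h]
      exact mtab i k
    have hdm : m = diagL ![-41/62, -57/124, -7/124, -8/31, -7/124, 9/62, 43/124] := by
      apply LinearMap.ext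
      intro x
      conv_lhs => rw [vec_expand x]
      rw [map_sum]
      funext k
      rw [Finset.sum_apply]
      simp only [map_smul, hme]
      simp only [Pi.smul_apply, smul_eq_mul, e, Pi.single_apply, mul_ite, mul_one, mul_zero,
        Finset.sum_ite_eq, Finset.mem_univ, if_true, diagL, LinearMap.pi_apply,
        LinearMap.smul_apply, LinearMap.proj_apply]
      ring
    have hRR : (-(107/124) : ℝ) • (1 : Module.End ℝ V7) + (25/124 : ℝ) • diagL ![1, 2, 4, 3, 4, 5, 6] =
        diagL ![-41/62, -57/124, -7/124, -8/31, -7/124, 9/62, 43/124] := by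
      apply LinearMap.ext
      intro x
      funext k
      simp only [LinearMap.add_apply, LinearMap.smul_apply, Module.End.one_apply, Pi.add_apply,
        Pi.smul_apply, smul_eq_mul, diagL, LinearMap.pi_apply, LinearMap.proj_apply]
      rcases fin7cases k with rfl|rfl|rfl|rfl|rfl|rfl|rfl <;>
        (simp only [A0, A1, A2, A3, A4, A5, A6, B0, B1, B2, B3, B4, B5, B6]; ring)
    exact ⟨hdm.trans hRR.symm, hdm⟩
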